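/- Fix k ∈ ℕ^n with k ≠ 0, continuous r, intensity matrix M and continuous payments as in the setup. Suppose the matrix-valued functions V^{(y)}(·,t), y ∈ S̃(k), satisfy the backward matrix moment ODE system with terminal conditions V^{(y)}(t,t) = 𝟙(y=0)·Id. Then V^{(k)} has the integral representation V^{(k)}(s,t) = ∑_{ℓ=1}^n k_ℓ ∫_s^t ∏_s^x ( Id + [M(u) − k̄ r(u) Id] du ) R_ℓ(x) V^{(k−e_ℓ)}(x,t) dx + ∑_{y ∈ S(k), y ∉ E_n} ( ∏_ℓ C(k_ℓ, y_ℓ) ) ∫_s^t ∏_s^x ( Id + [M(u) − k̄ r(u) Id] du ) C^{(y)}(x) V^{(k−y)}(x,t) dx, where ∏_s^x denotes the product integral (Peano–Baker series). -/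

import Mathlib

open MeasureTheory intervalIntegral

attribute [local instance] Matrix.linftyOpNormedAddCommGroup Matrix.linftyOpNormedSpace
  Matrix.linftyOpNormedRing Matrix.linftyOpNormedAlgebra

noncomputable instance matrixENormedAddMonoid {ι : Type*} [Fintype ι] : ENormedAddMonoid (Matrix ι ι ℝ) :=
  NormedAddGroup.toENormedAddMonoid

instance matrixPseudoMetrizableSpace {ι : Type*} [Fintype ι] :
    TopologicalSpace.PseudoMetrizableSpace (Matrix ι ι ℝ) :=
  inferInstanceAs (TopologicalSpace.PseudoMetrizableSpace (ι → ι → ℝ))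

/-- Iterated integrals of the Peano-Baker series:
`I_0(s,t) = Id`, `I_{m+1}(s,t) = int_s^t I_m(s,x) A(x) dx`. -/
noncomputable def iterInt {ι : Type*} [Fintype ι] [DecidableEq ι]
    (A : ℝ → Matrix ι ι ℝ) : ℕ → ℝ → ℝ → Matrix ι ι ℝ
  | 0, _s, _t => 1
  | m + 1, s, t => ∫ x in s..t, iterInt A m s x * A x

/-- The Peano-Baker series (product integral) of `A` over `(s,t]`. -/
noncomputable def peanoBaker {ι : Type*} [Fintype ι] [DecidableEq ι]
    (A : ℝ → Matrix ι ι ℝ) (s t : ℝ) : Matrix ι ι ℝ :=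
  ∑' m : ℕ, iterInt A m s t

/-- The intensity matrix `M(s)` with off-diagonal entries `μ_{ij}(s)` and diagonal
entries `−∑_{j≠i} μ_{ij}(s)`. -/
noncomputable def intensity {J : ℕ} (μ : Fin J → Fin J → ℝ → ℝ) (s : ℝ) :
    Matrix (Fin J) (Fin J) ℝ :=
  Matrix.of fun i j => if i = j then -(∑ j' ∈ Finset.univ.erase i, μ i j' s) else μ i j s

/-- The matrix `B_ℓ(s) = {b^ℓ_{ij}(s)}_{i,j}` of transition payments. -/
def Bmat {J n : ℕ} (bt : Fin n → Fin J → Fin J → ℝ → ℝ) (ℓ : Fin n) (s : ℝ) :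
    Matrix (Fin J) (Fin J) ℝ :=
  Matrix.of fun i j => bt ℓ i j s

/-- `R_ℓ(s) = M(s) ∘ B_ℓ(s) + Δ(b^ℓ(s))` (Hadamard product plus diagonal of sojourn rates). -/
noncomputable def Rmat {J n : ℕ} (μ : Fin J → Fin J → ℝ → ℝ)
    (bt : Fin n → Fin J → Fin J → ℝ → ℝ) (bs : Fin n → Fin J → ℝ → ℝ)
    (ℓ : Fin n) (s : ℝ) : Matrix (Fin J) (Fin J) ℝ :=
  Matrix.hadamard (intensity μ s) (Bmat bt ℓ s) + Matrix.diagonal (fun i => bs ℓ i s)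

/-- `C^{(y)}(s) = M(s) ∘ B₁(s)^{∘y₁} ∘ ⋯ ∘ Bₙ(s)^{∘yₙ}`. -/
noncomputable def Cmat {J n : ℕ} (μ : Fin J → Fin J → ℝ → ℝ)
    (bt : Fin n → Fin J → Fin J → ℝ → ℝ) (y : Fin n → ℕ) (s : ℝ) :
    Matrix (Fin J) (Fin J) ℝ :=
  Matrix.hadamard (intensity μ s) (Matrix.of fun i j => ∏ ℓ, (bt ℓ i j s) ^ (y ℓ))

/-- The set of nonzero multi-indices componentwise below `x`. -/
def Sfin {n : ℕ} (x : Fin n → ℕ) : Finset (Fin n → ℕ) := (Finset.Iic x).erase 0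

/-- `S̃(x) = S(x) ∪ {0}`, i.e. all multi-indices componentwise below `x`. -/
def Stil {n : ℕ} (x : Fin n → ℕ) : Finset (Fin n → ℕ) := Finset.Iic x

/-- The matrix `A(s,u;θ) = M(u) ∘ {exp(v(s,u)⟨θ,b_{ij}(u)⟩)}_{ij} + v(s,u) ∑_ℓ θ_ℓ Δ(b^ℓ(u))`,
where `v(s,u) = exp(−∫_s^u r)`. -/
noncomputable def Amat {J n : ℕ} (r : ℝ → ℝ) (μ : Fin J → Fin J → ℝ → ℝ)
    (bt : Fin n → Fin J → Fin J → ℝ → ℝ) (bs : Fin n → Fin J → ℝ → ℝ)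
    (s u : ℝ) (θ : Fin n → ℝ) : Matrix (Fin J) (Fin J) ℝ :=
  Matrix.of (fun i j => intensity μ u i j *
      Real.exp (Real.exp (-∫ x in s..u, r x) * ∑ ℓ, θ ℓ * bt ℓ i j u))
    + Real.exp (-∫ x in s..u, r x) • ∑ ℓ, θ ℓ • Matrix.diagonal (fun i => bs ℓ i u)

/-- The right-hand side of the backward matrix moment ODE system:
`(ȳ r(s) Id − M(s)) V^{(y)} − ∑_ℓ y_ℓ R_ℓ(s) V^{(y−e_ℓ)}
  − ∑_{ξ ∈ S(y), ξ ∉ E_n} (∏_ℓ C(y_ℓ,ξ_ℓ)) C^{(ξ)}(s) V^{(y−ξ)}`,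
as (−1) times the `s`-derivative, i.e. this is exactly `∂/∂s V^{(y)}(s,t)`. -/
noncomputable def momentRHS {J n : ℕ} (r : ℝ → ℝ) (μ : Fin J → Fin J → ℝ → ℝ)
    (bt : Fin n → Fin J → Fin J → ℝ → ℝ) (bs : Fin n → Fin J → ℝ → ℝ)
    (V : (Fin n → ℕ) → ℝ → Matrix (Fin J) (Fin J) ℝ)
    (y : Fin n → ℕ) (s : ℝ) : Matrix (Fin J) (Fin J) ℝ :=
  ((∑ ℓ, (y ℓ : ℝ)) * r s) • V y s - intensity μ s * V y s
    - ∑ ℓ, (y ℓ : ℝ) • (Rmat μ bt bs ℓ s * V (y - Pi.single ℓ 1) s)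
    - ∑ ξ ∈ (Sfin y).filter (fun ξ => ¬ ∃ ℓ, ξ = Pi.single ℓ 1),
        (∏ ℓ, ((y ℓ).choose (ξ ℓ) : ℝ)) • (Cmat μ bt ξ s * V (y - ξ) s)


section PeanoBakerAux

variable {ι : Type*} [Fintype ι] [DecidableEq ι] {A : ℝ → Matrix ι ι ℝ}

lemma matrix_norm_one_le : ‖(1 : Matrix ι ι ℝ)‖ ≤ 1 := by
  rw [← Matrix.diagonal_one, Matrix.linfty_opNorm_diagonal]
  refine (pi_norm_le_iff_of_nonneg zero_le_one).2 fun i => by simp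

lemma iterInt_continuous (hA : Continuous A) (m : ℕ) (s : ℝ) :
    Continuous (iterInt A m s) := by
  induction m with
  | zero => exact continuous_const
  | succ m ih =>
    have h : ∀ a b : ℝ, IntervalIntegrable (fun x => iterInt A m s x * A x) volume a b :=
      fun a b => ((ih.mul hA).intervalIntegrable a b)
    exact intervalIntegral.continuous_primitive h s

lemma iterInt_hasDerivAt (hA : Continuous A) (m : ℕ) (s x : ℝ) :
    HasDerivAt (iterInt A (m + 1) s) (iterInt A m s x * A x) x := by
  have hc : Continuous fun y => iterInt A m s y * A y := (iterInt_continuous hA m s).mul hA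
  exact intervalIntegral.integral_hasDerivAt_right (hc.intervalIntegrable s x)
    (hc.stronglyMeasurable.stronglyMeasurableAtFilter)
    hc.continuousAt

end PeanoBakerAux

section Bound
variable {ι : Type*} [Fintype ι] [DecidableEq ι] {A : ℝ → Matrix ι ι ℝ}

lemma iterInt_norm_le (hA : Continuous A) {a b K : ℝ}
    (hK : ∀ y ∈ Set.Icc a b, ‖A y‖ ≤ K) {s : ℝ} (hs : s ∈ Set.Icc a b) :
    ∀ m, ∀ x ∈ Set.Icc a b, ‖iterInt A m s x‖ ≤ (K * |x - s|) ^ m / m.factorial := by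
  have hK0 : 0 ≤ K := le_trans (norm_nonneg _) (hK s hs)
  intro m
  induction m with
  | zero => intro x _; simpa [iterInt] using matrix_norm_one_le
  | succ m ih =>
    intro x hx
    have hcont : Continuous fun y => iterInt A m s y * A y := (iterInt_continuous hA m s).mul hA
    have hfact : ((m + 1).factorial : ℝ) = (m + 1) * m.factorial := by
      push_cast [Nat.factorial_succ]; ring
    have hfm : (0:ℝ) < m.factorial := by positivity
    rcases le_total s x with h | h
    · have h1 : ‖iterInt A (m + 1) s x‖ ≤ ∫ y in s..x, ‖iterInt A m s y * A y‖ := by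
        rw [show iterInt A (m + 1) s x = ∫ y in s..x, iterInt A m s y * A y from rfl]
        exact intervalIntegral.norm_integral_le_integral_norm h
      have h2 : (∫ y in s..x, ‖iterInt A m s y * A y‖)
          ≤ ∫ y in s..x, K ^ (m + 1) / m.factorial * (y - s) ^ m := by
        apply intervalIntegral.integral_mono_on h (hcont.norm.intervalIntegrable s x)
          (((continuous_const).mul ((continuous_id.sub continuous_const).pow m)).intervalIntegrable s x)
        intro y hy
        have hyab : y ∈ Set.Icc a b := ⟨le_trans hs.1 hy.1, le_trans hy.2 hx.2⟩
        calc ‖iterInt A m s y * A y‖ ≤ ‖iterInt A m s y‖ * ‖A y‖ := norm_mul_le _ _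
          _ ≤ ((K * |y - s|) ^ m / m.factorial) * K := by
              apply mul_le_mul (ih y hyab) (hK y hyab) (norm_nonneg _)
              positivity
          _ = K ^ (m + 1) / m.factorial * (y - s) ^ m := by
              rw [abs_of_nonneg (sub_nonneg.2 hy.1), mul_pow]; ring
      have h3 : (∫ y in s..x, K ^ (m + 1) / m.factorial * (y - s) ^ m)
          = K ^ (m + 1) / m.factorial * ((x - s) ^ (m + 1) / (m + 1)) := by
        rw [intervalIntegral.integral_const_mul,
          intervalIntegral.integral_comp_sub_right (fun u => u ^ m) s]
        simp [integral_pow]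
      refine le_trans h1 (le_trans h2 (le_of_eq ?_))
      rw [h3, abs_of_nonneg (sub_nonneg.2 h), mul_pow, hfact, div_mul_div_comm]
      ring
    · have h1 : ‖iterInt A (m + 1) s x‖ ≤ ∫ y in x..s, ‖iterInt A m s y * A y‖ := by
        rw [show iterInt A (m + 1) s x = ∫ y in s..x, iterInt A m s y * A y from rfl,
          intervalIntegral.integral_symm, norm_neg]
        exact intervalIntegral.norm_integral_le_integral_norm h
      have h2 : (∫ y in x..s, ‖iterInt A m s y * A y‖)
          ≤ ∫ y in x..s, K ^ (m + 1) / m.factorial * (s - y) ^ m := by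
        apply intervalIntegral.integral_mono_on h (hcont.norm.intervalIntegrable x s)
          (((continuous_const).mul ((continuous_const.sub continuous_id).pow m)).intervalIntegrable x s)
        intro y hy
        have hyab : y ∈ Set.Icc a b := ⟨le_trans hx.1 hy.1, le_trans hy.2 hs.2⟩
        calc ‖iterInt A m s y * A y‖ ≤ ‖iterInt A m s y‖ * ‖A y‖ := norm_mul_le _ _
          _ ≤ ((K * |y - s|) ^ m / m.factorial) * K := by
              apply mul_le_mul (ih y hyab) (hK y hyab) (norm_nonneg _)
              positivity
          _ = K ^ (m + 1) / m.factorial * (s - y) ^ m := by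
              rw [abs_sub_comm, abs_of_nonneg (sub_nonneg.2 hy.2), mul_pow]; ring
      have h3 : (∫ y in x..s, K ^ (m + 1) / m.factorial * (s - y) ^ m)
          = K ^ (m + 1) / m.factorial * ((s - x) ^ (m + 1) / (m + 1)) := by
        rw [intervalIntegral.integral_const_mul,
          intervalIntegral.integral_comp_sub_left (fun u => u ^ m) s]
        simp [integral_pow]
      refine le_trans h1 (le_trans h2 (le_of_eq ?_))
      rw [h3, abs_sub_comm, abs_of_nonneg (sub_nonneg.2 h), mul_pow, hfact, div_mul_div_comm]
      ring

end Bound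

section PB
variable {ι : Type*} [Fintype ι] [DecidableEq ι] {A : ℝ → Matrix ι ι ℝ}

lemma summable_iterInt (hA : Continuous A) (s x : ℝ) :
    Summable fun m => iterInt A m s x := by
  obtain ⟨K, hK⟩ : ∃ K, ∀ y ∈ Set.Icc (min s x) (max s x), ‖A y‖ ≤ K :=
    isCompact_Icc.exists_bound_of_continuousOn hA.continuousOn
  have hs : s ∈ Set.Icc (min s x) (max s x) := ⟨min_le_left _ _, le_max_left _ _⟩
  have hx : x ∈ Set.Icc (min s x) (max s x) := ⟨min_le_right _ _, le_max_right _ _⟩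
  exact Summable.of_norm_bounded (Real.summable_pow_div_factorial _)
    fun m => iterInt_norm_le hA hK hs m x hx

lemma peanoBaker_self (A : ℝ → Matrix ι ι ℝ) (s : ℝ) : peanoBaker A s s = 1 := by
  rw [peanoBaker, tsum_eq_single 0 ?_]
  · rfl
  · rintro (_ | m) hm
    · exact absurd rfl hm
    · show (∫ x in s..s, iterInt A m s x * A x) = 0
      simp

lemma peanoBaker_hasDerivAt (hA : Continuous A) (s x : ℝ) :
    HasDerivAt (peanoBaker A s) (peanoBaker A s x * A x) x := by
  set a : ℝ := min s x - 1 with ha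
  set b : ℝ := max s x + 1 with hb
  have hab : a ≤ b := by
    have := min_le_max (a := s) (b := x); dsimp [a, b]; linarith
  obtain ⟨K, hK⟩ : ∃ K, ∀ y ∈ Set.Icc a b, ‖A y‖ ≤ K :=
    isCompact_Icc.exists_bound_of_continuousOn hA.continuousOn
  have hK0 : 0 ≤ K := le_trans (norm_nonneg _) (hK a ⟨le_refl a, hab⟩)
  have hsmem : s ∈ Set.Ioo a b := by
    constructor <;> dsimp [a, b]
    · have := min_le_left s x; linarith
    · have := le_max_left s x; linarith
  have hxmem : x ∈ Set.Ioo a b := by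
    constructor <;> dsimp [a, b]
    · have := min_le_right s x; linarith
    · have := le_max_right s x; linarith
  set g' : ℕ → ℝ → Matrix ι ι ℝ :=
    fun m y => Nat.rec 0 (fun p _ => iterInt A p s y * A y) m with hg'def
  set u : ℕ → ℝ := fun m => Nat.rec 0 (fun p _ => K * ((K * (b - a)) ^ p / p.factorial)) m
    with hudef
  have hu1 : Summable u := by
    have h1 : Summable fun p : ℕ => K * ((K * (b - a)) ^ p / p.factorial) :=
      (Real.summable_pow_div_factorial _).mul_left K
    exact (summable_nat_add_iff 1).1 h1
  have hg : ∀ m : ℕ, ∀ y ∈ Set.Ioo a b, HasDerivAt (fun z => iterInt A m s z) (g' m y) y := by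
    rintro (_ | m) y _
    · exact hasDerivAt_const _ _
    · exact iterInt_hasDerivAt hA m s y
  have hg'le : ∀ m : ℕ, ∀ y ∈ Set.Ioo a b, ‖g' m y‖ ≤ u m := by
    rintro (_ | m) y hy
    · simp [hg'def, hudef]
    · have hyI : y ∈ Set.Icc a b := Set.Ioo_subset_Icc_self hy
      have hsI : s ∈ Set.Icc a b := Set.Ioo_subset_Icc_self hsmem
      have habs : |y - s| ≤ b - a := by
        rw [abs_le]; constructor <;> [linarith [hyI.1, hsI.2]; linarith [hyI.2, hsI.1]]
      calc ‖iterInt A m s y * A y‖ ≤ ‖iterInt A m s y‖ * ‖A y‖ := norm_mul_le _ _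
        _ ≤ ((K * |y - s|) ^ m / m.factorial) * K := by
            refine mul_le_mul (iterInt_norm_le hA hK hsI m y hyI) (hK y hyI) (norm_nonneg _) ?_
            positivity
        _ ≤ ((K * (b - a)) ^ m / m.factorial) * K := by
            gcongr
        _ = u (m + 1) := by
            show _ = K * ((K * (b - a)) ^ m / (m.factorial : ℝ))
            ring
  have H := hasDerivAt_tsum_of_isPreconnected hu1 isOpen_Ioo isPreconnected_Ioo
    hg hg'le hsmem (summable_iterInt hA s s) hxmem
  have hsum' : Summable fun m => g' m x :=
    Summable.of_norm_bounded hu1 fun m => hg'le m x hxmem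
  have hkey : (∑' m, g' m x) = peanoBaker A s x * A x := by
    rw [Summable.tsum_eq_zero_add hsum']
    show 0 + (∑' m, iterInt A m s x * A x) = _
    rw [zero_add, (summable_iterInt hA s x).tsum_mul_right (A x), peanoBaker]
  rw [← hkey]
  exact H

lemma peanoBaker_continuous (hA : Continuous A) (s : ℝ) : Continuous (peanoBaker A s) :=
  continuous_iff_continuousAt.2 fun x => (peanoBaker_hasDerivAt hA s x).continuousAt

end PB

/-- if the matrix partial moments `V^{(y)}(·,t)`, `y ∈ S̃(k)`, satisfy the
backward matrix moment ODE system with terminal conditions, then `V^{(k)}` has the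
integral representation
`V^{(k)}(s,t) = ∑_ℓ k_ℓ ∫_s^t ∏_s^x (Id + [M−k̄ r Id]du) R_ℓ(x) V^{(k−e_ℓ)}(x,t) dx
 + ∑_{y ∈ S(k)\E_n} (∏_ℓ C(k_ℓ,y_ℓ)) ∫_s^t ∏_s^x (Id + [M−k̄ r Id]du) C^{(y)}(x) V^{(k−y)}(x,t) dx`. -/
theorem moment_integral_representation {J n : ℕ} (r : ℝ → ℝ) (μ : Fin J → Fin J → ℝ → ℝ)
    (bt : Fin n → Fin J → Fin J → ℝ → ℝ) (bs : Fin n → Fin J → ℝ → ℝ)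
    (hr : Continuous r)
    (hμc : ∀ i j, Continuous (μ i j))
    (hμ0 : ∀ i j, i ≠ j → ∀ s, 0 ≤ μ i j s)
    (hbtc : ∀ ℓ i j, Continuous (bt ℓ i j))
    (hbsc : ∀ ℓ i, Continuous (bs ℓ i))
    (hbt0 : ∀ ℓ i s, bt ℓ i i s = 0)
    (t : ℝ) (k : Fin n → ℕ) (hk : k ≠ 0)
    (V : (Fin n → ℕ) → ℝ → Matrix (Fin J) (Fin J) ℝ)
    (hode : ∀ y ∈ Stil k, ∀ s : ℝ, s ≤ t →
      HasDerivAt (V y) (momentRHS r μ bt bs V y s) s)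
    (hterm : ∀ y ∈ Stil k, V y t = if y = 0 then 1 else 0) :
    ∀ s : ℝ, s ≤ t →
      V k s
        = (∑ ℓ, (k ℓ : ℝ) •
            ∫ x in s..t,
              peanoBaker (fun u => intensity μ u
                  - ((∑ ℓ', (k ℓ' : ℝ)) * r u) • (1 : Matrix (Fin J) (Fin J) ℝ)) s x
                * Rmat μ bt bs ℓ x * V (k - Pi.single ℓ 1) x)
          + ∑ y ∈ (Sfin k).filter (fun y => ¬ ∃ ℓ, y = Pi.single ℓ 1),
              (∏ ℓ, ((k ℓ).choose (y ℓ) : ℝ)) •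
                ∫ x in s..t,
                  peanoBaker (fun u => intensity μ u
                      - ((∑ ℓ', (k ℓ' : ℝ)) * r u) • (1 : Matrix (Fin J) (Fin J) ℝ)) s x
                    * Cmat μ bt y x * V (k - y) x := by
  intro s hs
  classical
  have hkmem : k ∈ Stil k := Finset.mem_Iic.2 le_rfl
  have hmem1 : ∀ ℓ : Fin n, k - Pi.single ℓ 1 ∈ Stil k :=
    fun ℓ => Finset.mem_Iic.2 tsub_le_self
  have hmem2 : ∀ ξ : Fin n → ℕ, k - ξ ∈ Stil k := fun ξ => Finset.mem_Iic.2 tsub_le_self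
  have hIc : ∀ i j, Continuous fun u => intensity μ u i j := by
    intro i j
    unfold intensity
    by_cases h : i = j
    · simp only [Matrix.of_apply, if_pos h]
      exact (continuous_finset_sum _ fun j' _ => hμc i j').neg
    · simp only [Matrix.of_apply, if_neg h]
      exact hμc i j
  have hIcont : Continuous fun u => intensity μ u := continuous_matrix hIc
  set A : ℝ → Matrix (Fin J) (Fin J) ℝ := fun u => intensity μ u
      - ((∑ ℓ', (k ℓ' : ℝ)) * r u) • (1 : Matrix (Fin J) (Fin J) ℝ) with hAdef
  have hAc : Continuous A := hIcont.sub ((continuous_const.mul hr).smul continuous_const)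
  set P : ℝ → Matrix (Fin J) (Fin J) ℝ := peanoBaker A s with hPdef
  have hPc : Continuous P := peanoBaker_continuous hAc s
  have hRc : ∀ ℓ : Fin n, Continuous fun x => Rmat μ bt bs ℓ x := by
    intro ℓ
    apply continuous_matrix
    intro i j
    simp only [Rmat, Matrix.add_apply, Matrix.hadamard_apply, Bmat, Matrix.of_apply,
      Matrix.diagonal_apply]
    refine ((hIc i j).mul (hbtc ℓ i j)).add ?_
    by_cases h : i = j
    · simp only [if_pos h]; exact hbsc ℓ i
    · simp only [if_neg h]; exact continuous_const
  have hCc : ∀ ξ : Fin n → ℕ, Continuous fun x => Cmat μ bt ξ x := by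
    intro ξ
    apply continuous_matrix
    intro i j
    simp only [Cmat, Matrix.hadamard_apply, Matrix.of_apply]
    exact (hIc i j).mul (continuous_finset_prod _ fun ℓ _ => (hbtc ℓ i j).pow _)
  have hVcont : ∀ y ∈ Stil k, ContinuousOn (V y) (Set.Iic t) := fun y hy x hx =>
    ((hode y hy x hx).continuousAt).continuousWithinAt
  set F : ℝ → Matrix (Fin J) (Fin J) ℝ := fun x =>
      (∑ ℓ, (k ℓ : ℝ) • (Rmat μ bt bs ℓ x * V (k - Pi.single ℓ 1) x))
      + ∑ ξ ∈ (Sfin k).filter (fun ξ => ¬ ∃ ℓ, ξ = Pi.single ℓ 1),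
          (∏ ℓ, ((k ℓ).choose (ξ ℓ) : ℝ)) • (Cmat μ bt ξ x * V (k - ξ) x) with hFdef
  have hVk' : ∀ x : ℝ, x ≤ t → HasDerivAt (V k) (-(A x * V k x) - F x) x := by
    intro x hx
    have h := hode k hkmem x hx
    have he : momentRHS r μ bt bs V k x = -(A x * V k x) - F x := by
      simp only [momentRHS, hFdef, hAdef, Matrix.sub_mul, Matrix.smul_mul, Matrix.one_mul,
        neg_sub, sub_sub]
      abel
    exact he ▸ h
  have hIccIic : Set.Icc s t ⊆ Set.Iic t := fun x hx => hx.2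
  have hf1c : ∀ ℓ : Fin n, ContinuousOn
      (fun x => P x * Rmat μ bt bs ℓ x * V (k - Pi.single ℓ 1) x) (Set.Icc s t) :=
    fun ℓ => (hPc.continuousOn.mul (hRc ℓ).continuousOn).mul
      (((hVcont _ (hmem1 ℓ))).mono hIccIic)
  have hf2c : ∀ ξ : Fin n → ℕ, ContinuousOn
      (fun x => P x * Cmat μ bt ξ x * V (k - ξ) x) (Set.Icc s t) :=
    fun ξ => (hPc.continuousOn.mul (hCc ξ).continuousOn).mul
      (((hVcont _ (hmem2 ξ))).mono hIccIic)
  have hFc : ContinuousOn F (Set.Icc s t) := by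
    rw [hFdef]
    apply ContinuousOn.add
    · exact continuousOn_finset_sum _ fun ℓ _ =>
        (((hRc ℓ).continuousOn.mul (((hVcont _ (hmem1 ℓ))).mono hIccIic)).const_smul (k ℓ : ℝ))
    · exact continuousOn_finset_sum _ fun ξ _ =>
        (((hCc ξ).continuousOn.mul (((hVcont _ (hmem2 ξ))).mono hIccIic)).const_smul
          (∏ ℓ, ((k ℓ).choose (ξ ℓ) : ℝ)))
  have hg : ∀ x ∈ Set.uIcc s t, HasDerivAt (fun y => P y * V k y) (-(P x * F x)) x := by
    intro x hx
    rw [Set.uIcc_of_le hs] at hx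
    have h1 : HasDerivAt P (P x * A x) x := peanoBaker_hasDerivAt hAc s x
    have h3 := h1.mul (hVk' x hx.2)
    refine HasDerivAt.congr_deriv h3 ?_
    simp only [mul_sub, mul_neg, mul_assoc]
    abel
  have hgint : IntervalIntegrable (fun x => -(P x * F x)) volume s t := by
    apply ContinuousOn.intervalIntegrable
    rw [Set.uIcc_of_le hs]
    exact (hPc.continuousOn.mul hFc).neg
  have hmain := intervalIntegral.integral_eq_sub_of_hasDerivAt hg hgint
  have hVkt : V k t = 0 := by rw [hterm k hkmem, if_neg hk]
  have hPs : P s = 1 := by rw [hPdef]; exact peanoBaker_self A s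
  have hVks : V k s = ∫ x in s..t, P x * F x := by
    have h2 : (∫ x in s..t, -(P x * F x)) = -∫ x in s..t, P x * F x :=
      intervalIntegral.integral_neg
    rw [h2, hVkt, mul_zero, hPs, one_mul, zero_sub, neg_inj] at hmain
    exact hmain.symm
  have hpw : ∀ x : ℝ, P x * F x
      = (∑ ℓ, (k ℓ : ℝ) • (P x * Rmat μ bt bs ℓ x * V (k - Pi.single ℓ 1) x))
        + ∑ ξ ∈ (Sfin k).filter (fun ξ => ¬ ∃ ℓ, ξ = Pi.single ℓ 1),
            (∏ ℓ, ((k ℓ).choose (ξ ℓ) : ℝ)) • (P x * Cmat μ bt ξ x * V (k - ξ) x) := by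
    intro x
    rw [hFdef]
    simp only [mul_add, Finset.mul_sum, Matrix.mul_smul, ← mul_assoc]
  have hint1 : ∀ ℓ : Fin n, IntervalIntegrable
      (fun x => (k ℓ : ℝ) • (P x * Rmat μ bt bs ℓ x * V (k - Pi.single ℓ 1) x)) volume s t := by
    intro ℓ
    apply ContinuousOn.intervalIntegrable
    rw [Set.uIcc_of_le hs]
    exact (hf1c ℓ).const_smul (k ℓ : ℝ)
  have hint2 : ∀ ξ : Fin n → ℕ, IntervalIntegrable
      (fun x => (∏ ℓ, ((k ℓ).choose (ξ ℓ) : ℝ)) • (P x * Cmat μ bt ξ x * V (k - ξ) x))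
      volume s t := by
    intro ξ
    apply ContinuousOn.intervalIntegrable
    rw [Set.uIcc_of_le hs]
    exact (hf2c ξ).const_smul (∏ ℓ, ((k ℓ).choose (ξ ℓ) : ℝ))
  calc V k s = ∫ x in s..t, P x * F x := hVks
    _ = ∫ x in s..t,
          ((∑ ℓ, (k ℓ : ℝ) • (P x * Rmat μ bt bs ℓ x * V (k - Pi.single ℓ 1) x))
          + ∑ ξ ∈ (Sfin k).filter (fun ξ => ¬ ∃ ℓ, ξ = Pi.single ℓ 1),
              (∏ ℓ, ((k ℓ).choose (ξ ℓ) : ℝ)) • (P x * Cmat μ bt ξ x * V (k - ξ) x)) := by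
        simp only [hpw]
    _ = (∑ ℓ, (k ℓ : ℝ) • ∫ x in s..t, P x * Rmat μ bt bs ℓ x * V (k - Pi.single ℓ 1) x)
        + ∑ ξ ∈ (Sfin k).filter (fun ξ => ¬ ∃ ℓ, ξ = Pi.single ℓ 1),
            (∏ ℓ, ((k ℓ).choose (ξ ℓ) : ℝ)) • ∫ x in s..t, P x * Cmat μ bt ξ x * V (k - ξ) x := by
        have hS1 : IntervalIntegrable (fun x => ∑ ℓ, (k ℓ : ℝ) •
            (P x * Rmat μ bt bs ℓ x * V (k - Pi.single ℓ 1) x)) volume s t := by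
          apply ContinuousOn.intervalIntegrable
          rw [Set.uIcc_of_le hs]
          exact continuousOn_finset_sum _ fun ℓ _ => (hf1c ℓ).const_smul (k ℓ : ℝ)
        have hS2 : IntervalIntegrable (fun x => ∑ ξ ∈ (Sfin k).filter
            (fun ξ => ¬ ∃ ℓ, ξ = Pi.single ℓ 1), (∏ ℓ, ((k ℓ).choose (ξ ℓ) : ℝ)) •
            (P x * Cmat μ bt ξ x * V (k - ξ) x)) volume s t := by
          apply ContinuousOn.intervalIntegrable
          rw [Set.uIcc_of_le hs]
          exact continuousOn_finset_sum _ fun ξ _ => (hf2c ξ).const_smul (∏ ℓ, ((k ℓ).choose (ξ ℓ) : ℝ))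
        rw [intervalIntegral.integral_add hS1 hS2,
          intervalIntegral.integral_finset_sum (fun ℓ _ => hint1 ℓ),
          intervalIntegral.integral_finset_sum (fun ξ _ => hint2 ξ)]
        simp only [intervalIntegral.integral_smul]
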